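/- Under the hyperbolic-secant perturbation with bandwidth h > 0, the perturbed calibration function η satisfies sup_{s∈[0,1]} |η''(s)| ≤ (3/2)·tanh²(1/h)/h² ≤ (3/2)/h². -/

import Mathlib

open Real MeasureTheory


lemma tanh_eq' (x : ℝ) : Real.tanh x = Real.sinh x / Real.cosh x := Real.tanh_eq_sinh_div_cosh x

lemma continuous_tanh' : Continuous Real.tanh := by
  have : Real.tanh = fun x => Real.sinh x / Real.cosh x := funext tanh_eq'
  rw [this]
  exact Real.continuous_sinh.div Real.continuous_cosh fun x => (Real.cosh_pos x).ne'

lemma hasDerivAt_tanh' (x : ℝ) : HasDerivAt Real.tanh (1 - Real.tanh x ^ 2) x := by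
  have h : HasDerivAt (fun x => Real.sinh x / Real.cosh x)
      ((Real.cosh x * Real.cosh x - Real.sinh x * Real.sinh x) / Real.cosh x ^ 2) x :=
    (Real.hasDerivAt_sinh x).div (Real.hasDerivAt_cosh x) (Real.cosh_pos x).ne'
  have e : Real.tanh = fun x => Real.sinh x / Real.cosh x := funext tanh_eq'
  rw [e]
  convert h using 1
  have h2 : Real.cosh x ^ 2 - Real.sinh x ^ 2 = 1 := Real.cosh_sq_sub_sinh_sq x
  have hc := (Real.cosh_pos x).ne'
  simp only []
  field_simp

lemma abs_tanh' (x : ℝ) : |Real.tanh x| = Real.tanh |x| := by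
  rw [tanh_eq', tanh_eq', abs_div, Real.abs_sinh, abs_of_pos (Real.cosh_pos x), ← Real.cosh_abs]

lemma tanh_mono' : Monotone Real.tanh := by
  intro x y hxy
  rw [tanh_eq', tanh_eq', div_le_div_iff₀ (Real.cosh_pos x) (Real.cosh_pos y)]
  have h1 : 0 ≤ Real.sinh (y - x) := Real.sinh_nonneg_iff.2 (by linarith)
  have := Real.sinh_sub y x
  nlinarith
lemma tanh_nonneg' {x : ℝ} (hx : 0 ≤ x) : 0 ≤ Real.tanh x := by
  have := tanh_mono' hx; simpa using this
lemma abs_tanh_le_tanh' {x y : ℝ} (hxy : |x| ≤ y) : |Real.tanh x| ≤ Real.tanh y := by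
  rw [abs_tanh']; exact tanh_mono' hxy
lemma abs_tanh_le_one' (x : ℝ) : |Real.tanh x| ≤ 1 := by
  rw [abs_tanh', tanh_eq', div_le_one (Real.cosh_pos _)]
  exact (Real.sinh_lt_cosh _).le


/-- Sech kernel normalization constant `Z(u,h) = ∫₀¹ sech((t-u)/h) dt`. -/
noncomputable def Zker (u h : ℝ) : ℝ := ∫ t in (0:ℝ)..1, 1 / Real.cosh ((t - u) / h)

lemma cosh_ne (x : ℝ) : Real.cosh x ≠ 0 := (Real.cosh_pos x).ne'

lemma sech_cont (u h : ℝ) : Continuous fun t : ℝ => 1 / Real.cosh ((t - u) / h) :=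
  continuous_const.div (Real.continuous_cosh.comp (by fun_prop)) fun t => cosh_ne _

lemma Zker_eq {h : ℝ} (hh : 0 < h) (u : ℝ) :
    Zker u h = h * Real.arctan (Real.sinh ((1 - u) / h)) -
      h * Real.arctan (Real.sinh ((0 - u) / h)) := by
  have key : ∀ t ∈ Set.uIcc (0:ℝ) 1,
      HasDerivAt (fun t => h * Real.arctan (Real.sinh ((t - u) / h)))
        (1 / Real.cosh ((t - u) / h)) t := by
    intro t _
    have hx : HasDerivAt (fun t : ℝ => (t - u) / h) (1 / h) t := by
      simpa using ((hasDerivAt_id t).sub_const u).div_const h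
    have hs : HasDerivAt (fun t : ℝ => Real.sinh ((t - u) / h))
        (Real.cosh ((t - u) / h) * (1 / h)) t :=
      (Real.hasDerivAt_sinh _).comp t hx
    have ha : HasDerivAt (fun t : ℝ => Real.arctan (Real.sinh ((t - u) / h)))
        ((1 / (1 + Real.sinh ((t - u) / h) ^ 2)) * (Real.cosh ((t - u) / h) * (1 / h))) t :=
      (Real.hasDerivAt_arctan _).comp t hs
    have := ha.const_mul h
    refine this.congr_deriv ?_
    have h2 : 1 + Real.sinh ((t - u) / h) ^ 2 = Real.cosh ((t - u) / h) ^ 2 := by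
      have := Real.cosh_sq_sub_sinh_sq ((t - u) / h); linarith
    rw [h2]
    field_simp
  have := intervalIntegral.integral_eq_sub_of_hasDerivAt key
    ((sech_cont u h).intervalIntegrable 0 1)
  rw [Zker, this]

lemma Zker_cont {h : ℝ} (hh : 0 < h) : Continuous fun u => Zker u h := by
  have : (fun u => Zker u h) = fun u =>
      h * Real.arctan (Real.sinh ((1 - u) / h)) - h * Real.arctan (Real.sinh ((0 - u) / h)) :=
    funext fun u => Zker_eq hh u
  rw [this]
  have c1 : Continuous fun u : ℝ => Real.arctan (Real.sinh ((1 - u) / h)) :=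
    Real.continuous_arctan.comp (Real.continuous_sinh.comp (by fun_prop))
  have c2 : Continuous fun u : ℝ => Real.arctan (Real.sinh ((0 - u) / h)) :=
    Real.continuous_arctan.comp (Real.continuous_sinh.comp (by fun_prop))
  exact (continuous_const.mul c1).sub (continuous_const.mul c2)

lemma Zker_le_one (u h : ℝ) : Zker u h ≤ 1 := by
  have : Zker u h ≤ ∫ _t in (0:ℝ)..1, (1:ℝ) := by
    apply intervalIntegral.integral_mono_on zero_le_one
      ((sech_cont u h).intervalIntegrable 0 1) (intervalIntegrable_const)
    intro t _
    rw [div_le_one (Real.cosh_pos _)]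
    exact Real.one_le_cosh _
  simpa using this

lemma le_Zker {h u : ℝ} (hh : 0 < h) (hu : u ∈ Set.Icc (0:ℝ) 1) :
    1 / Real.cosh (1 / h) ≤ Zker u h := by
  have : (∫ _t in (0:ℝ)..1, 1 / Real.cosh (1 / h)) ≤ Zker u h := by
    apply intervalIntegral.integral_mono_on zero_le_one intervalIntegrable_const
      ((sech_cont u h).intervalIntegrable 0 1)
    intro t ht
    apply div_le_div_of_nonneg_left one_pos.le (Real.cosh_pos _)
    rw [Real.cosh_le_cosh]
    rw [abs_div, abs_div, abs_of_pos hh, abs_one]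
    have habs : |t - u| ≤ 1 := by
      rw [abs_le]; simp only [Set.mem_Icc] at ht hu
      constructor <;> [linarith [ht.1, hu.2]; linarith [ht.2, hu.1]]
    gcongr
  simpa using this

lemma Zker_pos {h u : ℝ} (hh : 0 < h) (hu : u ∈ Set.Icc (0:ℝ) 1) : 0 < Zker u h :=
  lt_of_lt_of_le (by positivity) (le_Zker hh hu)

/-- Unnormalized kernel weight `(1/Z(u,h))·sech((s-u)/h)`. -/
noncomputable def kerW (h s u : ℝ) : ℝ := (1 / Zker u h) * (1 / Real.cosh ((s - u) / h))

lemma kerW_nonneg {h u : ℝ} (hh : 0 < h) (hu : u ∈ Set.Icc (0:ℝ) 1) (s : ℝ) :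
    0 ≤ kerW h s u := by
  have := Zker_pos hh hu
  unfold kerW; positivity

lemma kerW_le {h u : ℝ} (hh : 0 < h) (hu : u ∈ Set.Icc (0:ℝ) 1) (s : ℝ) :
    kerW h s u ≤ Real.cosh (1 / h) := by
  unfold kerW
  have h1 : 1 / Zker u h ≤ Real.cosh (1 / h) := by
    rw [div_le_iff₀ (Zker_pos hh hu)]
    have := le_Zker hh hu
    rw [div_le_iff₀ (Real.cosh_pos _)] at this
    linarith [mul_comm (Zker u h) (Real.cosh (1 / h))]
  have h2 : 1 / Real.cosh ((s - u) / h) ≤ 1 := by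
    rw [div_le_one (Real.cosh_pos _)]; exact Real.one_le_cosh _
  calc (1 / Zker u h) * (1 / Real.cosh ((s - u) / h)) ≤ (1 / Zker u h) * 1 := by
        have := Zker_pos hh hu
        apply mul_le_mul_of_nonneg_left h2 (by positivity)
    _ ≤ Real.cosh (1 / h) := by rw [mul_one]; exact h1

lemma le_kerW {h u s : ℝ} (hh : 0 < h) (hu : u ∈ Set.Icc (0:ℝ) 1)
    (hs : s ∈ Set.Icc (-1:ℝ) 2) : 1 / Real.cosh (2 / h) ≤ kerW h s u := by
  unfold kerW
  have h1 : (1:ℝ) ≤ 1 / Zker u h := by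
    rw [le_div_iff₀ (Zker_pos hh hu), one_mul]; exact Zker_le_one u h
  have h2 : 1 / Real.cosh (2 / h) ≤ 1 / Real.cosh ((s - u) / h) := by
    apply div_le_div_of_nonneg_left one_pos.le (Real.cosh_pos _)
    rw [Real.cosh_le_cosh, abs_div, abs_div, abs_of_pos hh]
    have habs : |s - u| ≤ |(2:ℝ)| := by
      rw [abs_le]; simp only [Set.mem_Icc] at hs hu
      rw [abs_two]
      constructor <;> [linarith [hs.1, hu.2]; linarith [hs.2, hu.1]]
    gcongr
  calc 1 / Real.cosh (2 / h) = 1 * (1 / Real.cosh (2 / h)) := (one_mul _).symm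
    _ ≤ (1 / Zker u h) * (1 / Real.cosh ((s - u) / h)) := by
        apply mul_le_mul h1 h2 (by positivity) (le_trans zero_le_one h1)

lemma kerW_meas {h : ℝ} (hh : 0 < h) (s : ℝ) : Measurable fun u => kerW h s u := by
  unfold kerW
  have c : Continuous fun u : ℝ => 1 / Real.cosh ((s - u) / h) :=
    continuous_const.div (Real.continuous_cosh.comp (by fun_prop)) fun u => cosh_ne _
  exact (measurable_const.div (Zker_cont hh).measurable).mul c.measurable

lemma hasDerivAt_kerW {h : ℝ} (hh : 0 < h) (u s : ℝ) :
    HasDerivAt (fun s => kerW h s u)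
      (-(1 / h) * (Real.tanh ((s - u) / h) * kerW h s u)) s := by
  have hx : HasDerivAt (fun s : ℝ => (s - u) / h) (1 / h) s := by
    simpa using ((hasDerivAt_id s).sub_const u).div_const h
  have hcosh : HasDerivAt (fun s : ℝ => Real.cosh ((s - u) / h))
      (Real.sinh ((s - u) / h) * (1 / h)) s := (Real.hasDerivAt_cosh _).comp s hx
  have hinv := (hcosh.inv (cosh_ne _)).const_mul (1 / Zker u h)
  have e : (fun s => kerW h s u) = fun s => (1 / Zker u h) * (Real.cosh ((s - u) / h))⁻¹ := by
    funext s; rw [kerW]; rw [one_div (Real.cosh ((s - u) / h))]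
  rw [e]
  refine hinv.congr_deriv ?_
  rw [kerW, tanh_eq']
  have hc := cosh_ne ((s - u) / h)
  field_simp

lemma hasDerivAt_TkerW {h : ℝ} (hh : 0 < h) (u s : ℝ) :
    HasDerivAt (fun s => Real.tanh ((s - u) / h) * kerW h s u)
      ((1 / h) * ((1 - 2 * Real.tanh ((s - u) / h) ^ 2) * kerW h s u)) s := by
  have hx : HasDerivAt (fun s : ℝ => (s - u) / h) (1 / h) s := by
    simpa using ((hasDerivAt_id s).sub_const u).div_const h
  have hT : HasDerivAt (fun s : ℝ => Real.tanh ((s - u) / h))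
      ((1 - Real.tanh ((s - u) / h) ^ 2) * (1 / h)) s := (hasDerivAt_tanh' _).comp s hx
  have := hT.mul (hasDerivAt_kerW hh u s)
  refine this.congr_deriv ?_
  ring

lemma ae_Icc (μ : Measure ℝ) [IsProbabilityMeasure μ] (hsupp : μ (Set.Icc (0:ℝ) 1) = 1) :
    ∀ᵐ u ∂μ, u ∈ Set.Icc (0:ℝ) 1 := by
  rw [MeasureTheory.ae_iff]
  have : {u : ℝ | ¬u ∈ Set.Icc (0:ℝ) 1} = (Set.Icc (0:ℝ) 1)ᶜ := rfl
  rw [this, measure_compl measurableSet_Icc (measure_ne_top μ _), hsupp, measure_univ, tsub_self]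

lemma integrable_mul_kerW (μ : Measure ℝ) [IsProbabilityMeasure μ]
    (hsupp : μ (Set.Icc (0:ℝ) 1) = 1) {h : ℝ} (hh : 0 < h) {g : ℝ → ℝ} (hg : Measurable g)
    {C : ℝ} (hb : ∀ u ∈ Set.Icc (0:ℝ) 1, |g u| ≤ C) (s : ℝ) :
    Integrable (fun u => g u * kerW h s u) μ := by
  have hC : 0 ≤ C := le_trans (abs_nonneg _) (hb 0 ⟨le_refl 0, zero_le_one⟩)
  apply Integrable.mono' (integrable_const (C * Real.cosh (1 / h)))
    ((hg.mul (kerW_meas hh s)).aestronglyMeasurable)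
  filter_upwards [ae_Icc μ hsupp] with u hu
  rw [Real.norm_eq_abs, Pi.mul_apply, abs_mul, abs_of_nonneg (kerW_nonneg hh hu s)]
  exact mul_le_mul (hb u hu) (kerW_le hh hu s) (kerW_nonneg hh hu s) hC

noncomputable def Ifun (μ : Measure ℝ) (h : ℝ) (A : ℝ → ℝ) (s : ℝ) : ℝ :=
  ∫ u, A u * kerW h s u ∂μ
noncomputable def Jfun (μ : Measure ℝ) (h : ℝ) (A : ℝ → ℝ) (s : ℝ) : ℝ :=
  ∫ u, A u * Real.tanh ((s - u) / h) * kerW h s u ∂μ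
noncomputable def Lfun (μ : Measure ℝ) (h : ℝ) (A : ℝ → ℝ) (s : ℝ) : ℝ :=
  ∫ u, A u * (1 - 2 * Real.tanh ((s - u) / h) ^ 2) * kerW h s u ∂μ

lemma tanh_meas {h : ℝ} (s : ℝ) : Measurable fun u : ℝ => Real.tanh ((s - u) / h) :=
  (continuous_tanh'.comp (by fun_prop)).measurable

lemma hasDerivAt_Ifun (μ : Measure ℝ) [IsProbabilityMeasure μ]
    (hsupp : μ (Set.Icc (0:ℝ) 1) = 1) {h : ℝ} (hh : 0 < h) {A : ℝ → ℝ} (hA : Measurable A)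
    (hAb : ∀ u ∈ Set.Icc (0:ℝ) 1, |A u| ≤ 1) (s : ℝ) :
    HasDerivAt (Ifun μ h A) (-(1 / h) * Jfun μ h A s) s := by
  have key := hasDerivAt_integral_of_dominated_loc_of_deriv_le (μ := μ)
    (F := fun x u => A u * kerW h x u)
    (F' := fun x u => A u * (-(1 / h) * (Real.tanh ((x - u) / h) * kerW h x u)))
    (x₀ := s) (bound := fun _ => (1 / h) * Real.cosh (1 / h)) (Metric.ball_mem_nhds s one_pos)
    (Filter.Eventually.of_forall fun x => (hA.mul (kerW_meas hh x)).aestronglyMeasurable)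
    (integrable_mul_kerW μ hsupp hh hA hAb s)
    ((hA.mul ((((tanh_meas (h := h) s).mul (kerW_meas hh s)).const_mul (-(1 / h))))).aestronglyMeasurable)
    ?_ (integrable_const _)
    (Filter.Eventually.of_forall fun u x _ => (hasDerivAt_kerW hh u x).const_mul (A u))
  · have := key.2
    refine this.congr_deriv ?_
    rw [show (fun u => A u * (-(1 / h) * (Real.tanh ((s - u) / h) * kerW h s u)))
        = fun u => (-(1 / h)) * (A u * Real.tanh ((s - u) / h) * kerW h s u) from
      funext fun u => by ring]
    rw [MeasureTheory.integral_const_mul, Jfun]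
  · filter_upwards [ae_Icc μ hsupp] with u hu
    intro x _
    have h1 := hAb u hu
    have h2 := abs_tanh_le_one' ((x - u) / h)
    have h3 := kerW_nonneg hh hu x
    have h4 := kerW_le hh hu x
    have h5 : (0:ℝ) < 1 / h := by positivity
    rw [Real.norm_eq_abs, abs_mul, abs_mul, abs_neg, abs_of_pos h5, abs_mul,
      abs_of_nonneg h3]
    calc |A u| * (1 / h * (|Real.tanh ((x - u) / h)| * kerW h x u))
        ≤ 1 * (1 / h * (1 * Real.cosh (1 / h))) := by
          gcongr
          all_goals first | exact h1 | exact h2 | exact h4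
      _ = 1 / h * Real.cosh (1 / h) := by ring

lemma hasDerivAt_Jfun (μ : Measure ℝ) [IsProbabilityMeasure μ]
    (hsupp : μ (Set.Icc (0:ℝ) 1) = 1) {h : ℝ} (hh : 0 < h) {A : ℝ → ℝ} (hA : Measurable A)
    (hAb : ∀ u ∈ Set.Icc (0:ℝ) 1, |A u| ≤ 1) (s : ℝ) :
    HasDerivAt (Jfun μ h A) ((1 / h) * Lfun μ h A s) s := by
  have hint : Integrable (fun u => A u * Real.tanh ((s - u) / h) * kerW h s u) μ := by
    apply integrable_mul_kerW μ hsupp hh (hA.mul (tanh_meas s)) (C := 1) ?_ s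
    intro u hu
    rw [Pi.mul_apply, abs_mul]
    exact mul_le_one₀ (hAb u hu) (abs_nonneg _) (abs_tanh_le_one' _)
  have key := hasDerivAt_integral_of_dominated_loc_of_deriv_le (μ := μ)
    (F := fun x u => A u * Real.tanh ((x - u) / h) * kerW h x u)
    (F' := fun x u => A u * ((1 / h) * ((1 - 2 * Real.tanh ((x - u) / h) ^ 2) * kerW h x u)))
    (x₀ := s) (bound := fun _ => (1 / h) * Real.cosh (1 / h)) (Metric.ball_mem_nhds s one_pos)
    (Filter.Eventually.of_forall fun x =>
      ((hA.mul (tanh_meas x)).mul (kerW_meas hh x)).aestronglyMeasurable)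
    hint
    ((hA.mul ((((measurable_const.sub (((tanh_meas (h := h) s).pow_const 2).const_mul 2)).mul
      (kerW_meas hh s)).const_mul (1 / h)))).aestronglyMeasurable)
    ?_ (integrable_const _)
    ?_
  · have := key.2
    refine this.congr_deriv ?_
    rw [show (fun u => A u * ((1 / h) * ((1 - 2 * Real.tanh ((s - u) / h) ^ 2) * kerW h s u)))
        = fun u => (1 / h) * (A u * (1 - 2 * Real.tanh ((s - u) / h) ^ 2) * kerW h s u) from
      funext fun u => by ring]
    rw [MeasureTheory.integral_const_mul, Lfun]
  · filter_upwards [ae_Icc μ hsupp] with u hu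
    intro x _
    have h1 := hAb u hu
    have h2 := abs_tanh_le_one' ((x - u) / h)
    have h3 := kerW_nonneg hh hu x
    have h4 := kerW_le hh hu x
    have h5 : (0:ℝ) < 1 / h := by positivity
    have h6 : |1 - 2 * Real.tanh ((x - u) / h) ^ 2| ≤ 1 := by
      rw [abs_le]
      constructor <;> nlinarith [sq_abs (Real.tanh ((x - u) / h)), abs_nonneg (Real.tanh ((x - u) / h))]
    rw [Real.norm_eq_abs, abs_mul, abs_mul, abs_of_pos h5, abs_mul, abs_of_nonneg h3]
    calc |A u| * (1 / h * (|1 - 2 * Real.tanh ((x - u) / h) ^ 2| * kerW h x u))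
        ≤ 1 * (1 / h * (1 * Real.cosh (1 / h))) := by
          gcongr
          all_goals first | exact h1 | exact h6 | exact h4
      _ = 1 / h * Real.cosh (1 / h) := by ring
  · filter_upwards with u
    intro x _
    have := (hasDerivAt_TkerW hh u x).const_mul (A u)
    have e : ∀ y, A u * Real.tanh ((y - u) / h) * kerW h y u
        = A u * (Real.tanh ((y - u) / h) * kerW h y u) := fun y => by ring
    simp only [e]; exact this

lemma weighted_cs (μ : Measure ℝ) {F G K : ℝ → ℝ}
    (hK : ∀ᵐ u ∂μ, 0 ≤ K u)
    (h1 : Integrable (fun u => F u * G u * K u) μ)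
    (h2 : Integrable (fun u => F u ^ 2 * K u) μ)
    (h3 : Integrable (fun u => G u ^ 2 * K u) μ) :
    (∫ u, F u * G u * K u ∂μ) ^ 2
      ≤ (∫ u, F u ^ 2 * K u ∂μ) * (∫ u, G u ^ 2 * K u ∂μ) := by
  set p := ∫ u, F u ^ 2 * K u ∂μ with hp
  set q := ∫ u, G u ^ 2 * K u ∂μ with hqdef
  set c := ∫ u, F u * G u * K u ∂μ with hc
  have hq0 : 0 ≤ q := integral_nonneg_of_ae (hK.mono fun u h => by positivity)
  have hp0 : 0 ≤ p := integral_nonneg_of_ae (hK.mono fun u h => by positivity)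
  rcases hq0.eq_or_lt with hq | hq
  · have hzero : (fun u => G u ^ 2 * K u) =ᵐ[μ] 0 :=
      (integral_eq_zero_iff_of_nonneg_ae (hK.mono fun u h => by positivity) h3).1 hq.symm
    have hz2 : (fun u => F u * G u * K u) =ᵐ[μ] 0 := by
      filter_upwards [hzero] with u h
      simp only [Pi.zero_apply] at h ⊢
      rcases mul_eq_zero.1 h with h' | h'
      · rw [sq_eq_zero_iff.1 h']; ring
      · rw [h']; ring
    have : c = 0 := by rw [hc, integral_congr_ae hz2]; simp
    rw [this, ← hq]
    simp
  · have key : 0 ≤ ∫ u, (q * F u - c * G u) ^ 2 * K u ∂μ :=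
      integral_nonneg_of_ae (hK.mono fun u h => by positivity)
    have expand : (fun u => (q * F u - c * G u) ^ 2 * K u)
        = fun u => (q ^ 2 * (F u ^ 2 * K u) - (2 * q * c) * (F u * G u * K u))
          + c ^ 2 * (G u ^ 2 * K u) := funext fun u => by ring
    have i1 : Integrable (fun u => q ^ 2 * (F u ^ 2 * K u) - (2 * q * c) * (F u * G u * K u)) μ :=
      (h2.const_mul _).sub (h1.const_mul _)
    have i2 : Integrable (fun u => c ^ 2 * (G u ^ 2 * K u)) μ := h3.const_mul _
    rw [expand, integral_add i1 i2, integral_sub (h2.const_mul _) (h1.const_mul _),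
      integral_const_mul, integral_const_mul, integral_const_mul] at key
    nlinarith [key, hq, mul_pos hq hq]

lemma cov_bound (μ : Measure ℝ) [IsProbabilityMeasure μ] (hsupp : μ (Set.Icc (0:ℝ) 1) = 1)
    {h : ℝ} (hh : 0 < h) {s : ℝ} (hs : s ∈ Set.Icc (-1:ℝ) 2) {A B : ℝ → ℝ}
    (hA : Measurable A) (hB : Measurable B)
    (hAb : ∀ u ∈ Set.Icc (0:ℝ) 1, A u ∈ Set.Icc (0:ℝ) 1)
    {m r : ℝ} (hr : 0 ≤ r) (hBb : ∀ u ∈ Set.Icc (0:ℝ) 1, |B u - m| ≤ r) :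
    |(∫ u, A u * B u * kerW h s u ∂μ) / (∫ u, kerW h s u ∂μ)
      - ((∫ u, A u * kerW h s u ∂μ) / (∫ u, kerW h s u ∂μ)) *
        ((∫ u, B u * kerW h s u ∂μ) / (∫ u, kerW h s u ∂μ))| ≤ r / 2 := by
  have hae := ae_Icc μ hsupp
  have hKnn : ∀ᵐ u ∂μ, 0 ≤ kerW h s u := hae.mono fun u hu => kerW_nonneg hh hu s
  -- integrability of K
  have hKint : Integrable (fun u => kerW h s u) μ := by
    have := integrable_mul_kerW μ hsupp hh measurable_const
      (g := fun _ => (1:ℝ)) (C := 1) (fun u _ => by norm_num) s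
    simpa using this
  -- D is positive
  have hd : 0 < ∫ u, kerW h s u ∂μ := by
    have hle : (∫ _u, 1 / Real.cosh (2 / h) ∂μ) ≤ ∫ u, kerW h s u ∂μ := by
      apply integral_mono_ae (integrable_const _) hKint
      filter_upwards [hae] with u hu
      exact le_kerW hh hu hs
    have : (∫ _u, 1 / Real.cosh (2 / h) ∂μ) = 1 / Real.cosh (2 / h) := by simp
    rw [this] at hle
    exact lt_of_lt_of_le (by positivity) hle
  set d := ∫ u, kerW h s u ∂μ with hdd
  set a := (∫ u, A u * kerW h s u ∂μ) / d with ha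
  set b := (∫ u, B u * kerW h s u ∂μ) / d with hbdef
  have hBabs : ∀ u ∈ Set.Icc (0:ℝ) 1, |B u| ≤ |m| + r := fun u hu => by
    have h1 := hBb u hu
    have h2 : |B u| - |m| ≤ |B u - m| := abs_sub_abs_le_abs_sub (B u) m
    linarith
  have hAabs : ∀ u ∈ Set.Icc (0:ℝ) 1, |A u| ≤ 1 := fun u hu => by
    have := hAb u hu
    rw [abs_le]; exact ⟨by linarith [this.1], this.2⟩
  have hAK : Integrable (fun u => A u * kerW h s u) μ :=
    integrable_mul_kerW μ hsupp hh hA hAabs s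
  have hBK : Integrable (fun u => B u * kerW h s u) μ :=
    integrable_mul_kerW μ hsupp hh hB hBabs s
  have hABK : Integrable (fun u => A u * B u * kerW h s u) μ := by
    apply integrable_mul_kerW μ hsupp hh (hA.mul hB) (C := |m| + r) (fun u hu => ?_) s
    rw [Pi.mul_apply, abs_mul]
    calc |A u| * |B u| ≤ 1 * (|m| + r) :=
          mul_le_mul (hAabs u hu) (hBabs u hu) (abs_nonneg _) zero_le_one
      _ = |m| + r := one_mul _
  have hA2K : Integrable (fun u => A u ^ 2 * kerW h s u) μ := by
    apply integrable_mul_kerW μ hsupp hh (hA.pow_const 2) (C := 1) (fun u hu => ?_) s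
    rw [abs_pow]
    calc |A u| ^ 2 ≤ 1 ^ 2 := pow_le_pow_left₀ (abs_nonneg _) (hAabs u hu) 2
      _ = 1 := one_pow 2
  have hB2K : Integrable (fun u => B u ^ 2 * kerW h s u) μ := by
    apply integrable_mul_kerW μ hsupp hh (hB.pow_const 2) (C := (|m| + r) ^ 2) (fun u hu => ?_) s
    rw [abs_pow]
    exact pow_le_pow_left₀ (abs_nonneg _) (hBabs u hu) 2
  have hda : (∫ u, A u * kerW h s u ∂μ) = a * d := by
    rw [ha, div_mul_cancel₀ _ hd.ne']
  have hdb : (∫ u, B u * kerW h s u ∂μ) = b * d := by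
    rw [hbdef, div_mul_cancel₀ _ hd.ne']
  -- expansion identities
  have eA : ∀ c : ℝ, (∫ u, (A u - c) ^ 2 * kerW h s u ∂μ)
      = (∫ u, A u ^ 2 * kerW h s u ∂μ) - 2 * c * (a * d) + c ^ 2 * d := by
    intro c
    have e : (fun u => (A u - c) ^ 2 * kerW h s u)
        = fun u => (A u ^ 2 * kerW h s u - (2 * c) * (A u * kerW h s u))
          + c ^ 2 * kerW h s u := funext fun u => by ring
    have i1 : Integrable (fun u => A u ^ 2 * kerW h s u - (2 * c) * (A u * kerW h s u)) μ :=
      hA2K.sub (hAK.const_mul _)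
    have i2 : Integrable (fun u => c ^ 2 * kerW h s u) μ := hKint.const_mul _
    rw [e, integral_add i1 i2, integral_sub hA2K (hAK.const_mul _), integral_const_mul,
      integral_const_mul, hda]
  have eB : ∀ c : ℝ, (∫ u, (B u - c) ^ 2 * kerW h s u ∂μ)
      = (∫ u, B u ^ 2 * kerW h s u ∂μ) - 2 * c * (b * d) + c ^ 2 * d := by
    intro c
    have e : (fun u => (B u - c) ^ 2 * kerW h s u)
        = fun u => (B u ^ 2 * kerW h s u - (2 * c) * (B u * kerW h s u))
          + c ^ 2 * kerW h s u := funext fun u => by ring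
    have i1 : Integrable (fun u => B u ^ 2 * kerW h s u - (2 * c) * (B u * kerW h s u)) μ :=
      hB2K.sub (hBK.const_mul _)
    have i2 : Integrable (fun u => c ^ 2 * kerW h s u) μ := hKint.const_mul _
    rw [e, integral_add i1 i2, integral_sub hB2K (hBK.const_mul _), integral_const_mul,
      integral_const_mul, hdb]
  -- variance bounds
  have varA : (∫ u, (A u - a) ^ 2 * kerW h s u ∂μ) ≤ d / 4 := by
    have hmono : (∫ u, (A u - 1/2) ^ 2 * kerW h s u ∂μ) ≤ ∫ u, (1/4 : ℝ) * kerW h s u ∂μ := by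
      apply integral_mono_ae ?_ (hKint.const_mul _)
      · filter_upwards [hae] with u hu
        have h1 := hAb u hu
        have h2 := kerW_nonneg hh hu s
        apply mul_le_mul_of_nonneg_right ?_ h2
        nlinarith [h1.1, h1.2]
      · have e : (fun u => (A u - 1/2) ^ 2 * kerW h s u)
            = fun u => (A u ^ 2 * kerW h s u - 1 * (A u * kerW h s u))
              + (1/4 : ℝ) * kerW h s u := funext fun u => by ring
        rw [e]
        have i1 : Integrable (fun u => A u ^ 2 * kerW h s u - 1 * (A u * kerW h s u)) μ :=
          hA2K.sub (hAK.const_mul _)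
        exact i1.add (hKint.const_mul _)
    rw [integral_const_mul] at hmono
    rw [eA a]
    rw [eA (1/2)] at hmono
    nlinarith [sq_nonneg (a - 1/2), hd.le]
  have varB : (∫ u, (B u - b) ^ 2 * kerW h s u ∂μ) ≤ r ^ 2 * d := by
    have hmono : (∫ u, (B u - m) ^ 2 * kerW h s u ∂μ) ≤ ∫ u, (r ^ 2 : ℝ) * kerW h s u ∂μ := by
      apply integral_mono_ae ?_ (hKint.const_mul _)
      · filter_upwards [hae] with u hu
        have h1 := hBb u hu
        have h2 := kerW_nonneg hh hu s
        apply mul_le_mul_of_nonneg_right ?_ h2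
        nlinarith [abs_nonneg (B u - m), sq_abs (B u - m)]
      · have e : (fun u => (B u - m) ^ 2 * kerW h s u)
            = fun u => (B u ^ 2 * kerW h s u - (2 * m) * (B u * kerW h s u))
              + m ^ 2 * kerW h s u := funext fun u => by ring
        rw [e]
        have i1 : Integrable (fun u => B u ^ 2 * kerW h s u - (2 * m) * (B u * kerW h s u)) μ :=
          hB2K.sub (hBK.const_mul _)
        exact i1.add (hKint.const_mul _)
    rw [integral_const_mul] at hmono
    rw [eB b]
    rw [eB m] at hmono
    nlinarith [sq_nonneg (b - m), hd.le]
  -- integrability of product pieces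
  have hFGK : Integrable (fun u => (A u - a) * (B u - b) * kerW h s u) μ := by
    apply integrable_mul_kerW μ hsupp hh ((hA.sub measurable_const).mul (hB.sub measurable_const))
      (C := (1 + |a|) * (|m| + r + |b|)) (fun u hu => ?_) s
    show |(A u - a) * (B u - b)| ≤ _
    rw [abs_mul]
    apply mul_le_mul ?_ ?_ (abs_nonneg _) (by positivity)
    · calc |A u - a| ≤ |A u| + |a| := abs_sub _ _
        _ ≤ 1 + |a| := by linarith [hAabs u hu]
    · calc |B u - b| ≤ |B u| + |b| := abs_sub _ _
        _ ≤ |m| + r + |b| := by linarith [hBabs u hu]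
  have hF2K : Integrable (fun u => (A u - a) ^ 2 * kerW h s u) μ := by
    apply integrable_mul_kerW μ hsupp hh ((hA.sub measurable_const).pow_const 2)
      (C := (1 + |a|) ^ 2) (fun u hu => ?_) s
    rw [abs_pow]
    apply pow_le_pow_left₀ (abs_nonneg _) ?_ 2
    calc |A u - a| ≤ |A u| + |a| := abs_sub _ _
      _ ≤ 1 + |a| := by linarith [hAabs u hu]
  have hG2K : Integrable (fun u => (B u - b) ^ 2 * kerW h s u) μ := by
    apply integrable_mul_kerW μ hsupp hh ((hB.sub measurable_const).pow_const 2)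
      (C := (|m| + r + |b|) ^ 2) (fun u hu => ?_) s
    rw [abs_pow]
    apply pow_le_pow_left₀ (abs_nonneg _) ?_ 2
    calc |B u - b| ≤ |B u| + |b| := abs_sub _ _
      _ ≤ |m| + r + |b| := by linarith [hBabs u hu]
  -- Cauchy-Schwarz
  have cs := weighted_cs μ hKnn hFGK hF2K hG2K
  have hF2nn : 0 ≤ ∫ u, (A u - a) ^ 2 * kerW h s u ∂μ :=
    integral_nonneg_of_ae (hKnn.mono fun u h => by positivity)
  have hG2nn : 0 ≤ ∫ u, (B u - b) ^ 2 * kerW h s u ∂μ :=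
    integral_nonneg_of_ae (hKnn.mono fun u h => by positivity)
  have hsq : (∫ u, (A u - a) * (B u - b) * kerW h s u ∂μ) ^ 2 ≤ (r * d / 2) ^ 2 := by
    calc (∫ u, (A u - a) * (B u - b) * kerW h s u ∂μ) ^ 2
        ≤ (∫ u, (A u - a) ^ 2 * kerW h s u ∂μ) * (∫ u, (B u - b) ^ 2 * kerW h s u ∂μ) := cs
      _ ≤ (d / 4) * (r ^ 2 * d) := mul_le_mul varA varB hG2nn (by linarith [hd.le])
      _ = (r * d / 2) ^ 2 := by ring
  have habs : |∫ u, (A u - a) * (B u - b) * kerW h s u ∂μ| ≤ r * d / 2 := by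
    have h0 : 0 ≤ r * d / 2 := by positivity
    nlinarith [sq_abs (∫ u, (A u - a) * (B u - b) * kerW h s u ∂μ),
      abs_nonneg (∫ u, (A u - a) * (B u - b) * kerW h s u ∂μ)]
  -- covariance identity
  have key1 : (∫ u, (A u - a) * (B u - b) * kerW h s u ∂μ)
      = (∫ u, A u * B u * kerW h s u ∂μ) - a * b * d := by
    have e : (fun u => (A u - a) * (B u - b) * kerW h s u)
        = fun u => ((A u * B u * kerW h s u - a * (B u * kerW h s u))
          - b * (A u * kerW h s u)) + (a * b) * kerW h s u := funext fun u => by ring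
    have i1 : Integrable (fun u => A u * B u * kerW h s u - a * (B u * kerW h s u)) μ :=
      hABK.sub (hBK.const_mul _)
    have i2 : Integrable
        (fun u => A u * B u * kerW h s u - a * (B u * kerW h s u) - b * (A u * kerW h s u)) μ :=
      i1.sub (hAK.const_mul _)
    have i3 : Integrable (fun u => (a * b) * kerW h s u) μ := hKint.const_mul _
    rw [e, integral_add i2 i3, integral_sub i1 (hAK.const_mul _),
      integral_sub hABK (hBK.const_mul _), integral_const_mul, integral_const_mul,
      integral_const_mul, hda, hdb]
    ring
  have goal_eq : (∫ u, A u * B u * kerW h s u ∂μ) / d - a * b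
      = (∫ u, (A u - a) * (B u - b) * kerW h s u ∂μ) / d := by
    rw [key1]
    field_simp
  rw [goal_eq, abs_div, abs_of_pos hd]
  rw [div_le_iff₀ hd]
  calc |∫ u, (A u - a) * (B u - b) * kerW h s u ∂μ| ≤ r * d / 2 := habs
    _ = r / 2 * d := by ring

/-- Denominator `D(s) = ∫ (1/Z(u,h))·sech((s-u)/h) dμ(u)`. -/
noncomputable def Dfun (μ : Measure ℝ) (h s : ℝ) : ℝ := ∫ u, kerW h s u ∂μ

/-- Expectation of `A` under the reweighted measure `w_s` (density `kerW h s / D(s)` w.r.t. μ). -/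
noncomputable def wExp (μ : Measure ℝ) (h s : ℝ) (A : ℝ → ℝ) : ℝ :=
  (∫ u, A u * kerW h s u ∂μ) / Dfun μ h s

/-- Covariance of `A` and `B` under `w_s`. -/
noncomputable def wCov (μ : Measure ℝ) (h s : ℝ) (A B : ℝ → ℝ) : ℝ :=
  wExp μ h s (fun u => A u * B u) - wExp μ h s A * wExp μ h s B

set_option maxHeartbeats 2000000 in
theorem perturbed_calibration_second_deriv_bound
    (μ : Measure ℝ) [IsProbabilityMeasure μ] (hsupp : μ (Set.Icc (0:ℝ) 1) = 1)
    (η₀ : ℝ → ℝ) (hη₀meas : Measurable η₀) (hη₀b : ∀ u ∈ Set.Icc (0:ℝ) 1, η₀ u ∈ Set.Icc (0:ℝ) 1)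
    (h : ℝ) (hh : 0 < h) :
    (∀ s ∈ Set.Icc (0:ℝ) 1,
        |deriv (deriv (fun s' => wExp μ h s' η₀)) s|
          ≤ (3 / 2) * Real.tanh (1 / h) ^ 2 / h ^ 2) ∧
    (3 / 2) * Real.tanh (1 / h) ^ 2 / h ^ 2 ≤ (3 / 2) / h ^ 2 := by
  constructor
  · intro s hs
    have hη1 : ∀ u ∈ Set.Icc (0:ℝ) 1, |η₀ u| ≤ 1 := fun u hu => by
      have := hη₀b u hu; rw [abs_le]; exact ⟨by linarith [this.1], this.2⟩
    have hone : ∀ u ∈ Set.Icc (0:ℝ) 1, |(fun _ : ℝ => (1:ℝ)) u| ≤ 1 := fun u _ => by norm_num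
    have hNd := hasDerivAt_Ifun μ hsupp hh hη₀meas hη1
    have hDd := hasDerivAt_Ifun μ hsupp hh measurable_const hone
    have hN1d := hasDerivAt_Jfun μ hsupp hh hη₀meas hη1
    have hD1d := hasDerivAt_Jfun μ hsupp hh measurable_const hone
    have hDfun : Dfun μ h = Ifun μ h (fun _ => 1) := by
      funext x; rw [Dfun, Ifun]; simp only [one_mul]
    have hDeq : ∀ x, Ifun μ h (fun _ => 1) x = ∫ u, kerW h s u ∂μ → True := fun _ _ => trivial
    have hae := ae_Icc μ hsupp
    have hDpos : ∀ x ∈ Set.Icc (-1:ℝ) 2, 0 < Ifun μ h (fun _ => 1) x := by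
      intro x hx
      have hKint : Integrable (fun u => (1:ℝ) * kerW h x u) μ :=
        integrable_mul_kerW μ hsupp hh measurable_const (C := 1) (fun u _ => by norm_num) x
      have hle : (∫ _u, 1 / Real.cosh (2 / h) ∂μ) ≤ ∫ u, (1:ℝ) * kerW h x u ∂μ := by
        apply integral_mono_ae (integrable_const _) hKint
        filter_upwards [hae] with u hu
        rw [one_mul]
        exact le_kerW hh hu hx
      have heq : (∫ _u, 1 / Real.cosh (2 / h) ∂μ) = 1 / Real.cosh (2 / h) := by simp
      rw [heq] at hle
      exact lt_of_lt_of_le (by positivity) hle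
    have hfeq : (fun s' => wExp μ h s' η₀)
        = fun s' => Ifun μ h η₀ s' / Ifun μ h (fun _ => 1) s' := by
      funext x; rw [wExp, hDfun]; rfl
    have hsU : s ∈ Set.Ioo (-1:ℝ) 2 := ⟨by linarith [hs.1], by linarith [hs.2]⟩
    set g : ℝ → ℝ := fun x =>
      (-(1 / h) * Jfun μ h η₀ x * Ifun μ h (fun _ => 1) x -
        Ifun μ h η₀ x * (-(1 / h) * Jfun μ h (fun _ => 1) x)) /
        Ifun μ h (fun _ => 1) x ^ 2 with hgdef
    have hderiv_f : ∀ x ∈ Set.Ioo (-1:ℝ) 2, HasDerivAt (fun s' => wExp μ h s' η₀) (g x) x := by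
      intro x hx
      rw [hfeq]
      exact ((hNd x).div (hDd x) (hDpos x (Set.Ioo_subset_Icc_self hx)).ne')
    have hEqOn : Set.EqOn (deriv (fun s' => wExp μ h s' η₀)) g (Set.Ioo (-1:ℝ) 2) :=
      fun x hx => (hderiv_f x hx).deriv
    have hev : deriv (fun s' => wExp μ h s' η₀) =ᶠ[nhds s] g :=
      Filter.eventuallyEq_of_mem (isOpen_Ioo.mem_nhds hsU) hEqOn
    rw [hev.deriv_eq]
    -- second derivative of g at s
    have hD0 : 0 < Ifun μ h (fun _ => 1) s := hDpos s (Set.Ioo_subset_Icc_self hsU)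
    have hnum : HasDerivAt (fun x => -(1 / h) * Jfun μ h η₀ x * Ifun μ h (fun _ => 1) x -
        Ifun μ h η₀ x * (-(1 / h) * Jfun μ h (fun _ => 1) x))
        ((-(1 / h) * ((1 / h) * Lfun μ h η₀ s) * Ifun μ h (fun _ => 1) s +
          -(1 / h) * Jfun μ h η₀ s * (-(1 / h) * Jfun μ h (fun _ => 1) s)) -
         (-(1 / h) * Jfun μ h η₀ s * (-(1 / h) * Jfun μ h (fun _ => 1) s) +
          Ifun μ h η₀ s * (-(1 / h) * ((1 / h) * Lfun μ h (fun _ => 1) s)))) s :=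
      (((hN1d s).const_mul (-(1 / h))).mul (hDd s)).sub
        ((hNd s).mul ((hD1d s).const_mul (-(1 / h))))
    have hden : HasDerivAt (fun x => Ifun μ h (fun _ => 1) x ^ 2)
        ((2 : ℕ) * Ifun μ h (fun _ => 1) s ^ 1 * (-(1 / h) * Jfun μ h (fun _ => 1) s)) s :=
      (hDd s).pow 2
    have hg' := hnum.div hden (pow_ne_zero 2 hD0.ne')
    -- abbreviations
    set τ := Real.tanh (1 / h) with hτ
    set n := Ifun μ h η₀ s with hndef
    set D := Ifun μ h (fun _ => 1) s with hDdef
    set n1 := Jfun μ h η₀ s with hn1def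
    set d1 := Jfun μ h (fun _ => 1) s with hd1def
    set n2 := Lfun μ h η₀ s with hn2def
    set d2 := Lfun μ h (fun _ => 1) s with hd2def
    have hval : deriv g s = (1 / h ^ 2) * (((-n2) / D - n / D * ((-d2) / D))
        - 2 * (d1 / D) * (n1 / D - n / D * (d1 / D))) := by
      rw [(show HasDerivAt g _ s from hg').deriv]
      field_simp
      ring
    rw [hval]
    have hsIcc : s ∈ Set.Icc (-1:ℝ) 2 := Set.Ioo_subset_Icc_self hsU
    have htau0 : 0 ≤ τ := tanh_nonneg' (by positivity)
    -- basic integral identifications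
    have eD : (∫ u, kerW h s u ∂μ) = D := by
      rw [hDdef, Ifun]; simp only [one_mul]
    have en : (∫ u, η₀ u * kerW h s u ∂μ) = n := rfl
    have en1 : (∫ u, η₀ u * Real.tanh ((s - u) / h) * kerW h s u ∂μ) = n1 := rfl
    have ed1 : (∫ u, Real.tanh ((s - u) / h) * kerW h s u ∂μ) = d1 := by
      rw [hd1def, Jfun]; simp only [one_mul]
    have e2 : (∫ u, η₀ u * (2 * Real.tanh ((s - u) / h) ^ 2 - 1) * kerW h s u ∂μ) = -n2 := by
      rw [hn2def, Lfun, ← integral_neg]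
      congr 1; funext u; ring
    have ed2 : (∫ u, (2 * Real.tanh ((s - u) / h) ^ 2 - 1) * kerW h s u ∂μ) = -d2 := by
      rw [hd2def, Lfun, ← integral_neg]
      congr 1
      have : (fun u => (2 * Real.tanh ((s - u) / h) ^ 2 - 1) * kerW h s u)
          = fun u => -((fun _ : ℝ => (1:ℝ)) u * (1 - 2 * Real.tanh ((s - u) / h) ^ 2)
            * kerW h s u) := by funext u; simp; ring
      rw [this]
    -- tanh bound on [0,1]
    have hTb : ∀ u ∈ Set.Icc (0:ℝ) 1, |Real.tanh ((s - u) / h)| ≤ τ := by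
      intro u hu
      apply abs_tanh_le_tanh'
      rw [abs_div, abs_of_pos hh, show (1:ℝ) / h = |1| / h by rw [abs_one]]
      have habs : |s - u| ≤ |(1:ℝ)| := by
        rw [abs_le, abs_one]; simp only [Set.mem_Icc] at hs hu
        constructor <;> [linarith [hs.1, hu.2]; linarith [hs.2, hu.1]]
      gcongr
    -- covariance bound 1 : B = tanh
    have hcov1 := cov_bound μ hsupp hh hsIcc hη₀meas (tanh_meas (h := h) s) hη₀b htau0
      (B := fun u => Real.tanh ((s - u) / h)) (m := 0) ?_
    swap
    · intro u hu
      rw [sub_zero]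
      exact hTb u hu
    rw [eD, en, en1, ed1] at hcov1
    -- covariance bound 2 : B = 2 tanh^2 - 1
    have hB2meas : Measurable fun u : ℝ => 2 * Real.tanh ((s - u) / h) ^ 2 - 1 :=
      (((tanh_meas (h := h) s).pow_const 2).const_mul 2).sub measurable_const
    have hcov2 := cov_bound μ hsupp hh hsIcc hη₀meas hB2meas hη₀b (sq_nonneg τ)
      (B := fun u => 2 * Real.tanh ((s - u) / h) ^ 2 - 1) (m := τ ^ 2 - 1) ?_
    swap
    · intro u hu
      have hT := hTb u hu
      have h0 : (0:ℝ) ≤ Real.tanh ((s - u) / h) ^ 2 := sq_nonneg _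
      have h1 : Real.tanh ((s - u) / h) ^ 2 ≤ τ ^ 2 := by
        nlinarith [sq_abs (Real.tanh ((s - u) / h)), abs_nonneg (Real.tanh ((s - u) / h))]
      rw [abs_le]
      constructor <;> nlinarith
    rw [eD, en, e2, ed2] at hcov2
    -- |d1 / D| ≤ τ
    have hKint : Integrable (fun u => kerW h s u) μ := by
      have := integrable_mul_kerW μ hsupp hh measurable_const
        (g := fun _ => (1:ℝ)) (C := 1) (fun u _ => by norm_num) s
      simpa using this
    have hTKint : Integrable (fun u => Real.tanh ((s - u) / h) * kerW h s u) μ :=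
      integrable_mul_kerW μ hsupp hh (tanh_meas (h := h) s) (C := 1)
        (fun u _ => abs_tanh_le_one' _) s
    have heT : |d1 / D| ≤ τ := by
      have h1 : |∫ u, Real.tanh ((s - u) / h) * kerW h s u ∂μ|
          ≤ ∫ u, |Real.tanh ((s - u) / h) * kerW h s u| ∂μ := by
        simpa only [Real.norm_eq_abs] using
          MeasureTheory.norm_integral_le_integral_norm
            (fun u => Real.tanh ((s - u) / h) * kerW h s u) (μ := μ)
      have h2 : (∫ u, |Real.tanh ((s - u) / h) * kerW h s u| ∂μ)
          ≤ ∫ u, τ * kerW h s u ∂μ := by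
        apply integral_mono_ae hTKint.abs (hKint.const_mul τ)
        filter_upwards [hae] with u hu
        rw [abs_mul, abs_of_nonneg (kerW_nonneg hh hu s)]
        exact mul_le_mul_of_nonneg_right (hTb u hu) (kerW_nonneg hh hu s)
      have h3 : (∫ u, τ * kerW h s u ∂μ) = τ * D := by
        rw [integral_const_mul, eD]
      rw [ed1] at h1
      rw [abs_div, abs_of_pos hD0, div_le_iff₀ hD0]
      calc |d1| ≤ τ * D := by linarith
        _ = τ * D := rfl
    -- final combination
    have hX := hcov2
    have hY := hcov1
    have hcomb : |(-n2 / D - n / D * (-d2 / D)) - 2 * (d1 / D) * (n1 / D - n / D * (d1 / D))|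
        ≤ (3 / 2) * τ ^ 2 := by
      have htri : |(-n2 / D - n / D * (-d2 / D)) - 2 * (d1 / D) * (n1 / D - n / D * (d1 / D))|
          ≤ |(-n2 / D - n / D * (-d2 / D))| + |2 * (d1 / D) * (n1 / D - n / D * (d1 / D))| :=
        abs_sub _ _
      have hprod : |2 * (d1 / D) * (n1 / D - n / D * (d1 / D))| ≤ 2 * τ * (τ / 2) := by
        rw [abs_mul, abs_mul, abs_two]
        have := mul_le_mul heT hY (abs_nonneg _) htau0
        nlinarith [abs_nonneg (d1 / D), abs_nonneg (n1 / D - n / D * (d1 / D))]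
      nlinarith [hX]
    calc |1 / h ^ 2 * ((-n2 / D - n / D * (-d2 / D))
          - 2 * (d1 / D) * (n1 / D - n / D * (d1 / D)))|
        = 1 / h ^ 2 * |(-n2 / D - n / D * (-d2 / D))
          - 2 * (d1 / D) * (n1 / D - n / D * (d1 / D))| := by
          rw [abs_mul, abs_of_pos (show (0:ℝ) < 1 / h ^ 2 by positivity)]
      _ ≤ 1 / h ^ 2 * ((3 / 2) * τ ^ 2) := by
          apply mul_le_mul_of_nonneg_left hcomb (by positivity)
      _ = 3 / 2 * τ ^ 2 / h ^ 2 := by ring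
  · have ht : Real.tanh (1 / h) ^ 2 ≤ 1 := by
      have h1 := abs_tanh_le_one' (1 / h)
      nlinarith [abs_nonneg (Real.tanh (1 / h)), sq_abs (Real.tanh (1 / h))]
    have h2 : (0:ℝ) < h ^ 2 := by positivity
    calc (3 / 2) * Real.tanh (1 / h) ^ 2 / h ^ 2 ≤ (3 / 2) * 1 / h ^ 2 := by gcongr
      _ = (3 / 2) / h ^ 2 := by rw [mul_one]
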